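/- Let d ≥ 1, let 0 ≤ α ≤ β < 1, and let r_α, r_β > 0 be such that (B_k^{r_α,α})_{k∈ℤ^d∖{0}} and (B_j^{r_β,β})_{j∈ℤ^d∖{0}} both cover ℝ^d and both have the finite overlap property. Then the α-covering is almost subordinate to the β-covering: there exists n ∈ ℕ₀ such that for every k ∈ ℤ^d∖{0} there is j ∈ ℤ^d∖{0} with B_k^{r_α,α} ⊂ ⋃_{l ∈ j^{n*}} B_l^{r_β,β}, where j^{0*} = {j} and j^{(m+1)*} = {l ∈ ℤ^d∖{0} : ∃ l′ ∈ j^{m*} with B_l^{r_β,β} ∩ B_{l′}^{r_β,β} ≠ ∅}. -/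

import Mathlib

open MeasureTheory
open scoped ENNReal

/-- The integer lattice point `k ∈ ℤ^d` viewed as an element of `ℝ^d`. -/
noncomputable def intVec {d : ℕ} (k : Fin d → ℤ) : EuclideanSpace ℝ (Fin d) :=
  (EuclideanSpace.equiv (Fin d) ℝ).symm (fun i => (k i : ℝ))

/-- The ball `B_k^r = {ξ ∈ ℝ^d : |ξ - |k|^{α₀} k| < r |k|^{α₀}}` with `α₀ = α/(1-α)`, a member of
the standard `α`-covering of the frequency space `ℝ^d`. -/
noncomputable def alphaBall (d : ℕ) (α r : ℝ) (k : Fin d → ℤ) :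
    Set (EuclideanSpace ℝ (Fin d)) :=
  Metric.ball ((‖intVec k‖ ^ (α / (1 - α))) • intVec k) (r * ‖intVec k‖ ^ (α / (1 - α)))

/-- Iterated neighbor sets of an index `j` with respect to the covering `B`:
`j^{0*} = {j}` and `j^{(m+1)*} = {l : B_l meets B_{l'} for some l' ∈ j^{m*}}`. -/
def neighborIter {ι X : Type*} (B : ι → Set X) (j : ι) : ℕ → Set ι
  | 0 => {j}
  | m + 1 => {l | ∃ l' ∈ neighborIter B j m, (B l ∩ B l').Nonempty}

section AuxLemmas
open Real
open scoped RealInnerProductSpace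
variable {d : ℕ} {α β rα rβ : ℝ}

lemma coord_le_norm {d : ℕ} (x : EuclideanSpace ℝ (Fin d)) (i : Fin d) : |x i| ≤ ‖x‖ := by
  have h := EuclideanSpace.norm_eq x
  rw [h, ← Real.sqrt_sq_eq_abs]
  apply Real.sqrt_le_sqrt
  have : |x i|^2 ≤ ∑ j, ‖x j‖^2 := by
    have := Finset.single_le_sum (f := fun j => ‖x j‖^2) (fun j _ => by positivity)
      (Finset.mem_univ i)
    simpa [sq_abs] using this
  simpa [sq_abs] using this

lemma one_le_norm_intVec {d : ℕ} {k : Fin d → ℤ} (hk : k ≠ 0) : 1 ≤ ‖intVec k‖ := by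
  obtain ⟨i, hi⟩ : ∃ i, k i ≠ 0 := by
    by_contra h; push_neg at h; exact hk (funext h)
  have h1 : (1:ℝ) ≤ |intVec k i| := by
    show (1:ℝ) ≤ |((k i : ℝ))|
    exact_mod_cast Int.one_le_abs hi
  exact h1.trans (coord_le_norm _ _)


lemma norm_bounds_of_mem {d : ℕ} {α r : ℝ} {l : Fin d → ℤ} (hl : l ≠ 0)
    {ξ : EuclideanSpace ℝ (Fin d)} (hξ : ξ ∈ alphaBall d α r l) :
    ‖intVec l‖ ^ (α/(1-α) + 1) - r * ‖intVec l‖ ^ (α/(1-α)) < ‖ξ‖ ∧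
    ‖ξ‖ < ‖intVec l‖ ^ (α/(1-α) + 1) + r * ‖intVec l‖ ^ (α/(1-α)) := by
  set e := α/(1-α)
  set n := ‖intVec l‖ with hn
  have hn1 : 1 ≤ n := one_le_norm_intVec hl
  have hn0 : (0:ℝ) < n := lt_of_lt_of_le one_pos hn1
  have hc : ‖(n ^ e) • intVec l‖ = n ^ (e+1) := by
    rw [norm_smul, Real.norm_eq_abs, abs_of_nonneg (rpow_nonneg hn0.le e), ← hn,
      rpow_add_one hn0.ne' e]
  have hd : ‖ξ - (n ^ e) • intVec l‖ < r * n ^ e := by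
    have := hξ
    rw [alphaBall, Metric.mem_ball, dist_eq_norm] at this
    exact this
  constructor
  · have := norm_sub_norm_le ξ ((n ^ e) • intVec l)
    rw [hc] at this
    linarith [abs_le.1 (abs_norm_sub_norm_le ξ ((n ^ e) • intVec l))]
  · have h1 : ‖ξ‖ ≤ ‖(n ^ e) • intVec l‖ + ‖ξ - (n ^ e) • intVec l‖ := by
      have := norm_add_le ((n ^ e) • intVec l) (ξ - (n ^ e) • intVec l)
      simpa using this
    rw [hc] at h1; linarith

lemma expansion_aux {E : Type*} [NormedAddCommGroup E] [InnerProductSpace ℝ E]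
    {γ : ℝ} (hγ : 0 ≤ γ) (a b : E) (hab : ‖b‖ ≤ ‖a‖) :
    ‖b‖ ^ γ * ‖a - b‖ ≤ ‖(‖a‖ ^ γ) • a - (‖b‖ ^ γ) • b‖ := by
  set A := ‖a‖ with hA
  set B := ‖b‖ with hB
  have hA0 : 0 ≤ A := norm_nonneg a
  have hB0 : 0 ≤ B := norm_nonneg b
  set p := A ^ γ with hp
  set q := B ^ γ with hq
  have hp0 : 0 ≤ p := rpow_nonneg hA0 γ
  have hq0 : 0 ≤ q := rpow_nonneg hB0 γ
  have hqp : q ≤ p := rpow_le_rpow hB0 hab hγ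
  have ht : ⟪a, b⟫ ≤ A * B := real_inner_le_norm a b
  have hL : ‖(p • a - q • b)‖ ^ 2 = p^2 * A^2 + q^2 * B^2 - 2 * (p * q) * ⟪a, b⟫ := by
    rw [norm_sub_sq_real, norm_smul, norm_smul, real_inner_smul_left, real_inner_smul_right,
      Real.norm_eq_abs, Real.norm_eq_abs, abs_of_nonneg hp0, abs_of_nonneg hq0]
    ring
  have hR : (q * ‖a - b‖) ^ 2 = q^2 * (A^2 + B^2 - 2 * ⟪a, b⟫) := by
    rw [mul_pow, norm_sub_sq_real]; ring
  have key : (q * ‖a - b‖) ^ 2 ≤ ‖(p • a - q • b)‖ ^ 2 := by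
    rw [hL, hR]
    have hco : 0 ≤ 2 * q * (p - q) := by
      have := mul_nonneg hq0 (sub_nonneg.2 hqp); linarith
    have h2 : 0 ≤ 2 * q * (p - q) * (A * B - ⟪a, b⟫) :=
      mul_nonneg hco (sub_nonneg.2 ht)
    have hpAqB : q * B ≤ p * A := mul_le_mul hqp hab hB0 hp0
    have hqAqB : q * B ≤ q * A := mul_le_mul_of_nonneg_left hab hq0
    have h3 : 0 ≤ (p - q) * A * ((p + q) * A - 2 * (q * B)) := by
      apply mul_nonneg (mul_nonneg (sub_nonneg.2 hqp) hA0)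
      nlinarith [hpAqB, hqAqB]
    nlinarith [h2, h3]
  have h1 : 0 ≤ q * ‖a - b‖ := mul_nonneg hq0 (norm_nonneg _)
  exact (pow_le_pow_iff_left₀ h1 (norm_nonneg _) two_ne_zero).mp key

lemma expansion {E : Type*} [NormedAddCommGroup E] [InnerProductSpace ℝ E]
    {γ : ℝ} (hγ : 0 ≤ γ) (a b : E) :
    min ‖a‖ ‖b‖ ^ γ * ‖a - b‖ ≤ ‖(‖a‖ ^ γ) • a - (‖b‖ ^ γ) • b‖ := by
  rcases le_total ‖b‖ ‖a‖ with h | h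
  · rw [min_eq_right h]; exact expansion_aux hγ a b h
  · rw [min_eq_left h, norm_sub_rev a b, norm_sub_rev ((‖a‖ ^ γ) • a)]
    exact expansion_aux hγ b a h

lemma keyBig' (n r' e nrm : ℝ) (hn : 0 < n) (h2r : 2*r' < n)
    (hlow : n^(e+1) - r' * n^e < nrm) : n^(e+1) < 2 * nrm := by
  have hne : n^(e+1) = n^e * n := Real.rpow_add_one hn.ne' e
  have hpe : (0:ℝ) < n^e := Real.rpow_pos_of_pos hn e
  have h3 := mul_lt_mul_of_pos_right h2r hpe
  nlinarith [h3]

set_option maxHeartbeats 1000000 in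
lemma pair_dist_bound (hα0 : 0 ≤ α) (hαβ : α ≤ β) (hβ1 : β < 1)
    (hrα : 0 < rα) (hrβ : 0 < rβ) :
    ∃ C : ℝ, 0 ≤ C ∧ ∀ (k l l' : Fin d → ℤ), k ≠ 0 → l ≠ 0 → l' ≠ 0 →
      (alphaBall d β rβ l ∩ alphaBall d α rα k).Nonempty →
      (alphaBall d β rβ l' ∩ alphaBall d α rα k).Nonempty →
      ‖intVec l - intVec l'‖ ≤ C := by
  have hα1 : α < 1 := lt_of_le_of_lt hαβ hβ1
  have hβ0 : 0 ≤ β := le_trans hα0 hαβ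
  set a := α / (1 - α) with hadef
  set b := β / (1 - β) with hbdef
  have ha0 : 0 ≤ a := div_nonneg hα0 (by linarith)
  have hb0 : 0 ≤ b := div_nonneg hβ0 (by linarith)
  have hab : a ≤ b := by
    rw [hadef, hbdef, div_le_div_iff₀ (by linarith) (by linarith)]
    nlinarith
  have ha1 : (0:ℝ) < a + 1 := by linarith
  have hb1 : (0:ℝ) < b + 1 := by linarith
  set Pα := 1 + rα with hPαdef
  set Pβ := 1 + rβ with hPβdef
  have hPα1 : (1:ℝ) ≤ Pα := by linarith
  have hPβ1 : (1:ℝ) ≤ Pβ := by linarith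
  set Mβ := max 1 (2*rβ) with hMβdef
  have hMβ1 : (1:ℝ) ≤ Mβ := le_max_left _ _
  set T := max (2*rα) ((2*Pβ*Mβ^(b+1))^((a+1)⁻¹)) with hTdef
  set MT := max 1 T with hMTdef
  have hMT1 : (1:ℝ) ≤ MT := le_max_left _ _
  set R₁ := max (2*rβ) ((2*Pα*MT^(a+1))^((b+1)⁻¹)) with hR₁def
  have hR₁0 : 0 ≤ R₁ := le_trans (by positivity) (le_max_left _ _)
  set c₃ := (4*Pα*Pβ)^(b/(b+1)) with hc₃def
  set c₄ := (2*Pβ)^(b/(b+1)) with hc₄def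
  have hc₃0 : 0 ≤ c₃ := rpow_nonneg (by positivity) _
  have hc₄0 : 0 ≤ c₄ := rpow_nonneg (by positivity) _
  refine ⟨max (2*R₁) (2*rβ*c₃ + 2*rα*c₄), le_trans (by positivity) (le_max_left _ _),
    fun k l l' hk hl hl' ⟨ξ, hξβ, hξα⟩ ⟨ξ', hξ'β, hξ'α⟩ => ?_⟩
  set nk := ‖intVec k‖ with hnk
  set nl := ‖intVec l‖ with hnl
  set nl' := ‖intVec l'‖ with hnl'
  have hnk1 : 1 ≤ nk := one_le_norm_intVec hk
  have hnl1 : 1 ≤ nl := one_le_norm_intVec hl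
  have hnl'1 : 1 ≤ nl' := one_le_norm_intVec hl'
  have hnk0 : (0:ℝ) < nk := by linarith
  have hnl0 : (0:ℝ) < nl := by linarith
  have hnl'0 : (0:ℝ) < nl' := by linarith
  -- basic bounds
  obtain ⟨hξlo, hξhi⟩ := norm_bounds_of_mem hk hξα
  obtain ⟨hξ'lo, hξ'hi⟩ := norm_bounds_of_mem hk hξ'α
  obtain ⟨hξβlo, hξβhi⟩ := norm_bounds_of_mem hl hξβ
  obtain ⟨hξ'βlo, hξ'βhi⟩ := norm_bounds_of_mem hl' hξ'β
  rw [← hadef] at hξlo hξhi hξ'lo hξ'hi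
  rw [← hbdef] at hξβlo hξβhi hξ'βlo hξ'βhi
  rw [← hnk] at hξlo hξhi hξ'lo hξ'hi
  rw [← hnl] at hξβlo hξβhi
  rw [← hnl'] at hξ'βlo hξ'βhi
  -- powers
  have hpow : ∀ x : ℝ, 1 ≤ x → ∀ e : ℝ, 0 ≤ e → x ^ e ≤ x ^ (e+1) :=
    fun x hx e he => rpow_le_rpow_of_exponent_le hx (by linarith)
  have hξPα : ‖ξ‖ < Pα * nk^(a+1) := by
    have h1 : rα * nk^a ≤ rα * nk^(a+1) :=
      mul_le_mul_of_nonneg_left (hpow nk hnk1 a ha0) hrα.le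
    calc ‖ξ‖ < nk^(a+1) + rα * nk^a := hξhi
      _ ≤ nk^(a+1) + rα * nk^(a+1) := by linarith
      _ = Pα * nk^(a+1) := by ring
  have hξ'Pα : ‖ξ'‖ < Pα * nk^(a+1) := by
    have h1 : rα * nk^a ≤ rα * nk^(a+1) :=
      mul_le_mul_of_nonneg_left (hpow nk hnk1 a ha0) hrα.le
    calc ‖ξ'‖ < nk^(a+1) + rα * nk^a := hξ'hi
      _ ≤ nk^(a+1) + rα * nk^(a+1) := by linarith
      _ = Pα * nk^(a+1) := by ring
  have hξβPβ : ‖ξ‖ < Pβ * nl^(b+1) := by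
    have h1 : rβ * nl^b ≤ rβ * nl^(b+1) :=
      mul_le_mul_of_nonneg_left (hpow nl hnl1 b hb0) hrβ.le
    calc ‖ξ‖ < nl^(b+1) + rβ * nl^b := hξβhi
      _ ≤ nl^(b+1) + rβ * nl^(b+1) := by linarith
      _ = Pβ * nl^(b+1) := by ring
  have hξ'βPβ : ‖ξ'‖ < Pβ * nl'^(b+1) := by
    have h1 : rβ * nl'^b ≤ rβ * nl'^(b+1) :=
      mul_le_mul_of_nonneg_left (hpow nl' hnl'1 b hb0) hrβ.le
    calc ‖ξ'‖ < nl'^(b+1) + rβ * nl'^b := hξ'βhi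
      _ ≤ nl'^(b+1) + rβ * nl'^(b+1) := by linarith
      _ = Pβ * nl'^(b+1) := by ring
  have keyBig : ∀ (n r' e nrm : ℝ), 0 < n → 0 ≤ e → 2*r' < n →
      n^(e+1) - r' * n^e < nrm → n^(e+1) < 2 * nrm :=
    fun n r' e nrm hn _ h2r hlow => keyBig' n r' e nrm hn h2r hlow
  by_cases hT : nk ≤ T
  · -- small k case
    have boundm : ∀ (m : Fin d → ℤ), m ≠ 0 →
        ∀ ζ : EuclideanSpace ℝ (Fin d), ζ ∈ alphaBall d β rβ m →
        ζ ∈ alphaBall d α rα k → ‖intVec m‖ ≤ R₁ := by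
      intro m hm ζ hζβ hζα
      set nm := ‖intVec m‖ with hnm
      have hnm1 : 1 ≤ nm := one_le_norm_intVec hm
      have hnm0 : (0:ℝ) < nm := by linarith
      by_cases hcase : nm ≤ 2*rβ
      · exact le_trans hcase (le_max_left _ _)
      · push_neg at hcase
        obtain ⟨hζβlo, _⟩ := norm_bounds_of_mem hm hζβ
        obtain ⟨_, hζαhi⟩ := norm_bounds_of_mem hk hζα
        rw [← hbdef, ← hnm] at hζβlo
        rw [← hadef, ← hnk] at hζαhi
        have h1 : nm^(b+1) < 2 * ‖ζ‖ := keyBig nm rβ b ‖ζ‖ hnm0 hb0 hcase hζβlo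
        have hζPα : ‖ζ‖ < Pα * nk^(a+1) := by
          have hh : rα * nk^a ≤ rα * nk^(a+1) :=
            mul_le_mul_of_nonneg_left (hpow nk hnk1 a ha0) hrα.le
          calc ‖ζ‖ < nk^(a+1) + rα * nk^a := hζαhi
            _ ≤ nk^(a+1) + rα * nk^(a+1) := by linarith
            _ = Pα * nk^(a+1) := by ring
        have hnkMT : nk^(a+1) ≤ MT^(a+1) :=
          rpow_le_rpow hnk0.le (le_trans hT (le_max_right _ _)) ha1.le
        have h2 : nm^(b+1) ≤ 2*Pα*MT^(a+1) := by
          have hh2 := mul_le_mul_of_nonneg_left hnkMT (show (0:ℝ) ≤ 2*Pα by positivity)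
          linarith
        have h3 : nm ≤ (2*Pα*MT^(a+1))^((b+1)⁻¹) := by
          have := rpow_le_rpow (rpow_nonneg hnm0.le _) h2 (by positivity : (0:ℝ) ≤ (b+1)⁻¹)
          rwa [rpow_rpow_inv hnm0.le hb1.ne'] at this
        exact le_trans h3 (le_max_right _ _)
    have hb1' : nl ≤ R₁ := boundm l hl ξ hξβ hξα
    have hb2' : nl' ≤ R₁ := boundm l' hl' ξ' hξ'β hξ'α
    have : ‖intVec l - intVec l'‖ ≤ nl + nl' := norm_sub_le _ _
    refine le_trans this (le_trans (by linarith) (le_max_left _ _))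
  · -- big k case
    push_neg at hT
    have hT2rα : 2*rα < nk := lt_of_le_of_lt (le_max_left _ _) hT
    have hTpow : 2*Pβ*Mβ^(b+1) ≤ T^(a+1) := by
      have h0 : (0:ℝ) ≤ 2*Pβ*Mβ^(b+1) := by positivity
      have h1 : (2*Pβ*Mβ^(b+1))^((a+1)⁻¹) ≤ T := le_max_right _ _
      have := rpow_le_rpow (rpow_nonneg h0 _) h1 ha1.le
      rwa [rpow_inv_rpow h0 ha1.ne'] at this
    have hTnk : T^(a+1) ≤ nk^(a+1) := rpow_le_rpow (le_trans (by positivity) (le_max_left (2*rα) _)) hT.le ha1.le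
    have hξbig : nk^(a+1) < 2 * ‖ξ‖ := keyBig nk rα a ‖ξ‖ hnk0 ha0 hT2rα hξlo
    have hξ'big : nk^(a+1) < 2 * ‖ξ'‖ := keyBig nk rα a ‖ξ'‖ hnk0 ha0 hT2rα hξ'lo
    -- all l are big
    have lbig : ∀ (m : Fin d → ℤ), m ≠ 0 →
        ∀ ζ : EuclideanSpace ℝ (Fin d), ζ ∈ alphaBall d β rβ m →
        nk^(a+1) < 2 * ‖ζ‖ → 2*rβ < ‖intVec m‖ := by
      intro m hm ζ hζβ hζbig
      by_contra hcon
      push_neg at hcon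
      set nm := ‖intVec m‖ with hnm
      have hnm1 : 1 ≤ nm := one_le_norm_intVec hm
      have hnm0 : (0:ℝ) < nm := by linarith
      obtain ⟨_, hζβhi⟩ := norm_bounds_of_mem hm hζβ
      rw [← hbdef, ← hnm] at hζβhi
      have hnmMβ : nm ≤ Mβ := le_trans hcon (le_max_right _ _)
      have h1 : nm^(b+1) ≤ Mβ^(b+1) := rpow_le_rpow hnm0.le hnmMβ hb1.le
      have hζPβ : ‖ζ‖ < Pβ * nm^(b+1) := by
        have hh : rβ * nm^b ≤ rβ * nm^(b+1) :=
          mul_le_mul_of_nonneg_left (hpow nm hnm1 b hb0) hrβ.le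
        calc ‖ζ‖ < nm^(b+1) + rβ * nm^b := hζβhi
          _ ≤ nm^(b+1) + rβ * nm^(b+1) := by linarith
          _ = Pβ * nm^(b+1) := by ring
      have hPMβ := mul_le_mul_of_nonneg_left h1 (show (0:ℝ) ≤ Pβ by positivity)
      linarith
    have hlbig : 2*rβ < nl := lbig l hl ξ hξβ hξbig
    have hl'big : 2*rβ < nl' := lbig l' hl' ξ' hξ'β hξ'big
    -- comparable bounds
    have hnlup : nl^(b+1) < 2*Pα*nk^(a+1) := by
      have h1 : nl^(b+1) < 2 * ‖ξ‖ := keyBig nl rβ b ‖ξ‖ hnl0 hb0 hlbig hξβlo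
      linarith
    have hnl'up : nl'^(b+1) < 2*Pα*nk^(a+1) := by
      have h1 : nl'^(b+1) < 2 * ‖ξ'‖ := keyBig nl' rβ b ‖ξ'‖ hnl'0 hb0 hl'big hξ'βlo
      linarith
    have hnklo : nk^(a+1) < 2*Pβ*nl^(b+1) := by linarith
    have hnk'lo : nk^(a+1) < 2*Pβ*nl'^(b+1) := by linarith
    set m := min nl nl' with hmdef
    have hm1 : 1 ≤ m := le_min hnl1 hnl'1
    have hm0 : (0:ℝ) < m := by linarith
    have hmpow : nk^(a+1) < 2*Pβ*m^(b+1) := by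
      rcases min_choice nl nl' with h | h <;> rw [hmdef, h]
      · exact hnklo
      · exact hnk'lo
    -- (i) nl^b ≤ c₃ * m^b (and same for nl')
    have keyi : ∀ x : ℝ, 1 ≤ x → x^(b+1) < 2*Pα*nk^(a+1) → x^b ≤ c₃ * m^b := by
      intro x hx1 hxup
      have hx0 : (0:ℝ) < x := by linarith
      have h1 : x^(b+1) ≤ 4*Pα*Pβ*m^(b+1) := by
        have hh := mul_le_mul_of_nonneg_left hmpow.le (show (0:ℝ) ≤ 2*Pα by positivity)
        linarith
      have h2 : x ≤ (4*Pα*Pβ)^((b+1)⁻¹) * m := by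
        have h3 := rpow_le_rpow (rpow_nonneg hx0.le _) h1 (by positivity : (0:ℝ) ≤ (b+1)⁻¹)
        rw [rpow_rpow_inv hx0.le hb1.ne'] at h3
        have h4 : (4*Pα*Pβ*m^(b+1))^((b+1)⁻¹)
            = (4*Pα*Pβ)^((b+1)⁻¹) * (m^(b+1))^((b+1)⁻¹) :=
          mul_rpow (by positivity) (by positivity)
        rw [h4, rpow_rpow_inv hm0.le hb1.ne'] at h3
        exact h3
      have h5 : x^b ≤ ((4*Pα*Pβ)^((b+1)⁻¹) * m)^b := rpow_le_rpow hx0.le h2 hb0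
      have h6 : ((4*Pα*Pβ)^((b+1)⁻¹) * m)^b
          = ((4*Pα*Pβ)^((b+1)⁻¹))^b * m^b := mul_rpow (by positivity) hm0.le
      have h7 : ((4*Pα*Pβ)^((b+1)⁻¹))^b = c₃ := by
        rw [hc₃def, ← rpow_mul (by positivity)]
        congr 1
        field_simp
      rw [h6, h7] at h5
      exact h5
    have hic₃ : nl^b ≤ c₃ * m^b := keyi nl hnl1 hnlup
    have hic₃' : nl'^b ≤ c₃ * m^b := keyi nl' hnl'1 hnl'up
    -- (ii) nk^a ≤ c₄ * m^b
    have hii : nk^a ≤ c₄ * m^b := by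
      have hexp : a ≤ (a+1) * (b/(b+1)) := by
        rw [mul_div_assoc', le_div_iff₀ hb1]
        have : a*(b+1) = a*b + a := by ring
        have : (a+1)*b = a*b + b := by ring
        linarith
      have h1 : nk^a ≤ nk^((a+1)*(b/(b+1))) := rpow_le_rpow_of_exponent_le hnk1 hexp
      have h2 : nk^((a+1)*(b/(b+1))) = (nk^(a+1))^(b/(b+1)) := rpow_mul hnk0.le _ _
      have h3 : (nk^(a+1))^(b/(b+1)) ≤ (2*Pβ*m^(b+1))^(b/(b+1)) :=
        rpow_le_rpow (rpow_nonneg hnk0.le _) hmpow.le (by positivity)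
      have h4 : (2*Pβ*m^(b+1))^(b/(b+1)) = c₄ * (m^(b+1))^(b/(b+1)) :=
        mul_rpow (by positivity) (by positivity)
      have h5 : (m^(b+1))^(b/(b+1)) = m^b := by
        rw [← rpow_mul hm0.le]
        congr 1
        field_simp
      rw [h2] at h1
      rw [h4, h5] at h3
      exact le_trans h1 h3
    -- triangle inequality & expansion
    have hexp := expansion hb0 (intVec l) (intVec l')
    rw [← hnl, ← hnl', ← hmdef] at hexp
    have hdist : ‖(nl^b) • intVec l - (nl'^b) • intVec l'‖
        < rβ * nl^b + 2*(rα * nk^a) + rβ * nl'^b := by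
      have t1 : dist ((nl^b) • intVec l) ((nl'^b) • intVec l')
          ≤ dist ((nl^b) • intVec l) ξ + dist ξ ξ' + dist ξ' ((nl'^b) • intVec l') :=
        dist_triangle4 _ _ _ _
      have m1 : dist ((nl^b) • intVec l) ξ < rβ * nl^b := by
        rw [dist_comm]
        have := hξβ
        rw [alphaBall, Metric.mem_ball] at this
        rw [← hbdef, ← hnl] at this
        exact this
      have m2 : dist ξ' ((nl'^b) • intVec l') < rβ * nl'^b := by
        have := hξ'β
        rw [alphaBall, Metric.mem_ball] at this
        rw [← hbdef, ← hnl'] at this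
        exact this
      have m3 : dist ξ ξ' < 2*(rα * nk^a) := by
        have d1 := hξα; have d2 := hξ'α
        rw [alphaBall, Metric.mem_ball] at d1 d2
        rw [← hadef, ← hnk] at d1 d2
        calc dist ξ ξ' ≤ dist ξ ((nk^a) • intVec k) + dist ((nk^a) • intVec k) ξ' :=
              dist_triangle _ _ _
          _ < rα * nk^a + rα * nk^a := by rw [dist_comm ((nk^a) • intVec k) ξ']; linarith
          _ = 2*(rα * nk^a) := by ring
      rw [dist_eq_norm] at t1
      linarith
    have hfinal : m^b * ‖intVec l - intVec l'‖
        < (2*rβ*c₃ + 2*rα*c₄) * m^b := by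
      have hmb0 : (0:ℝ) < m^b := rpow_pos_of_pos hm0 b
      calc m^b * ‖intVec l - intVec l'‖ ≤ ‖(nl^b) • intVec l - (nl'^b) • intVec l'‖ := hexp
        _ < rβ * nl^b + 2*(rα * nk^a) + rβ * nl'^b := hdist
        _ ≤ rβ * (c₃ * m^b) + 2*(rα * (c₄ * m^b)) + rβ * (c₃ * m^b) := by
            have := mul_le_mul_of_nonneg_left hic₃ hrβ.le
            have := mul_le_mul_of_nonneg_left hic₃' hrβ.le
            have := mul_le_mul_of_nonneg_left hii hrα.le
            linarith
        _ = (2*rβ*c₃ + 2*rα*c₄) * m^b := by ring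
    have hmb0 : (0:ℝ) < m^b := rpow_pos_of_pos hm0 b
    have : ‖intVec l - intVec l'‖ < 2*rβ*c₃ + 2*rα*c₄ := by
      rw [mul_comm] at hfinal
      exact lt_of_mul_lt_mul_right hfinal hmb0.le
    exact le_trans this.le (le_max_right _ _)

lemma count_bound {d : ℕ} {α β rα rβ : ℝ} (hα0 : 0 ≤ α) (hαβ : α ≤ β) (hβ1 : β < 1)
    (hrα : 0 < rα) (hrβ : 0 < rβ) :
    ∃ N : ℕ, ∀ k : Fin d → ℤ, k ≠ 0 →
      {l : Fin d → ℤ | l ≠ 0 ∧ (alphaBall d β rβ l ∩ alphaBall d α rα k).Nonempty}.Finite ∧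
      {l : Fin d → ℤ | l ≠ 0 ∧ (alphaBall d β rβ l ∩ alphaBall d α rα k).Nonempty}.ncard ≤ N := by
  obtain ⟨C, hC0, hC⟩ := pair_dist_bound (d := d) hα0 hαβ hβ1 hrα hrβ
  set c : ℤ := ⌈C⌉ with hcdef
  refine ⟨((2*c+1).toNat)^d, fun k hk => ?_⟩
  set J := {l : Fin d → ℤ | l ≠ 0 ∧ (alphaBall d β rβ l ∩ alphaBall d α rα k).Nonempty}
    with hJdef
  rcases Set.eq_empty_or_nonempty J with hJe | ⟨l₀, hl₀⟩
  · rw [hJe]; simp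
  · set lo : Fin d → ℤ := fun i => l₀ i - c with hlodef
    set hi : Fin d → ℤ := fun i => l₀ i + c with hhidef
    have hsub : J ⊆ ↑(Finset.Icc lo hi) := by
      intro l hl
      have hd : ‖intVec l - intVec l₀‖ ≤ C :=
        hC k l l₀ hk hl.1 hl₀.1 hl.2 hl₀.2
      have hcoord : ∀ i, |l i - l₀ i| ≤ c := by
        intro i
        have h1 : |(intVec l - intVec l₀) i| ≤ ‖intVec l - intVec l₀‖ :=
          coord_le_norm _ i
        have h2 : (intVec l - intVec l₀) i = ((l i : ℝ) - (l₀ i : ℝ)) := rfl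
        have h3 : |((l i : ℝ) - (l₀ i : ℝ))| ≤ C := by rw [← h2]; exact h1.trans hd
        have h4 : ((|l i - l₀ i| : ℤ) : ℝ) ≤ C := by push_cast; exact_mod_cast h3
        have h5 : ((|l i - l₀ i| : ℤ) : ℝ) ≤ ((c : ℤ) : ℝ) := h4.trans (Int.le_ceil C)
        exact_mod_cast h5
      simp only [Finset.coe_Icc, Set.mem_Icc]
      constructor
      · intro i
        have := abs_le.1 (hcoord i)
        show l₀ i - c ≤ l i
        omega
      · intro i
        have := abs_le.1 (hcoord i)
        show l i ≤ l₀ i + c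
        omega
    have hfin : J.Finite := Set.Finite.subset (Finset.finite_toSet _) hsub
    refine ⟨hfin, ?_⟩
    calc J.ncard
        ≤ (Finset.Icc lo hi).card := by
          rw [← Set.ncard_coe_finset]
          exact Set.ncard_le_ncard hsub (Finset.finite_toSet _)
      _ = ((2*c+1).toNat)^d := by
        rw [Pi.card_Icc]
        have hcc : ∀ i : Fin d, (Finset.Icc (lo i) (hi i)).card = (2*c+1).toNat := by
          intro i
          rw [Int.card_Icc]
          show (l₀ i + c + 1 - (l₀ i - c)).toNat = _
          congr 1
          ring
        simp only [hcc]
        simp [Finset.prod_const]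

lemma neighborIter_succ_self {ι X : Type*} (B : ι → Set X) (j : ι) (m : ℕ)
    {i : ι} (hi : i ∈ neighborIter B j m) (hne : (B i).Nonempty) :
    i ∈ neighborIter B j (m + 1) :=
  ⟨i, hi, by simpa [Set.inter_self] using hne⟩

lemma chain_lemma {ι X : Type*} [TopologicalSpace X] (B : ι → Set X)
    (hB : ∀ i, IsOpen (B i)) (S : Set X) (hS : IsPreconnected S)
    (hcov : ∀ x ∈ S, ∃ i, x ∈ B i) (N : ℕ)
    (hfin : {i | (B i ∩ S).Nonempty}.Finite)
    (hcard : {i | (B i ∩ S).Nonempty}.ncard ≤ N)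
    (j : ι) (hj : (B j ∩ S).Nonempty) :
    S ⊆ ⋃ l ∈ neighborIter B j N, B l := by
  set J := {i | (B i ∩ S).Nonempty} with hJ
  have hne : ∀ i ∈ J, (B i).Nonempty := fun i hi => hi.mono Set.inter_subset_left
  -- monotonicity on J
  have hmono : ∀ m, ∀ i ∈ J, i ∈ neighborIter B j m → i ∈ neighborIter B j (m+1) :=
    fun m i hiJ hi => neighborIter_succ_self B j m hi (hne i hiJ)
  have hjmem : ∀ m, j ∈ neighborIter B j m := by
    intro m; induction m with
    | zero => rfl
    | succ m ih => exact hmono m j hj ih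
  have key : ∀ m : ℕ, J ⊆ neighborIter B j m ∨ m + 1 ≤ (J ∩ neighborIter B j m).ncard := by
    intro m
    induction m with
    | zero =>
      by_cases h : J ⊆ neighborIter B j 0
      · exact Or.inl h
      · right
        have : j ∈ J ∩ neighborIter B j 0 := ⟨hj, rfl⟩
        have hfin0 : (J ∩ neighborIter B j 0).Finite := hfin.subset Set.inter_subset_left
        exact (Set.ncard_pos hfin0).2 ⟨j, this⟩
    | succ m ih =>
      by_cases h : J ⊆ neighborIter B j (m+1)
      · exact Or.inl h
      · right
        rcases ih with ih | ih
        · exact absurd (fun i hi => hmono m i hi (ih hi)) h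
        -- connectedness step
        obtain ⟨i₁, hi₁J, hi₁n⟩ : ∃ i, i ∈ J ∧ i ∉ neighborIter B j (m+1) := by
          by_contra hc; push_neg at hc; exact h fun i hi => hc i hi
        set U : Set X := ⋃ i ∈ J ∩ neighborIter B j m, B i with hU
        set V : Set X := ⋃ i ∈ J \ neighborIter B j m, B i with hV
        have hUopen : IsOpen U := isOpen_biUnion fun i _ => hB i
        have hVopen : IsOpen V := isOpen_biUnion fun i _ => hB i
        have hSUV : S ⊆ U ∪ V := by
          intro x hx
          obtain ⟨i, hxi⟩ := hcov x hx
          have hiJ : i ∈ J := ⟨x, hxi, hx⟩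
          by_cases hin : i ∈ neighborIter B j m
          · exact Or.inl (Set.mem_biUnion ⟨hiJ, hin⟩ hxi)
          · exact Or.inr (Set.mem_biUnion ⟨hiJ, hin⟩ hxi)
        have hSU : (S ∩ U).Nonempty := by
          obtain ⟨x, hxB, hxS⟩ := id hj
          exact ⟨x, hxS, Set.mem_biUnion ⟨hj, hjmem m⟩ hxB⟩
        have hSV : (S ∩ V).Nonempty := by
          obtain ⟨x, hxB, hxS⟩ := id hi₁J
          have hi₁m : i₁ ∉ neighborIter B j m := fun hc => hi₁n (hmono m i₁ hi₁J hc)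
          exact ⟨x, hxS, Set.mem_biUnion ⟨hi₁J, hi₁m⟩ hxB⟩
        obtain ⟨x, hxS, hxU, hxV⟩ := hS U V hUopen hVopen hSUV hSU hSV
        obtain ⟨i, hi, hxi⟩ := Set.mem_iUnion₂.1 hxU
        obtain ⟨i', hi', hxi'⟩ := Set.mem_iUnion₂.1 hxV
        have hi'succ : i' ∈ neighborIter B j (m+1) := ⟨i, hi.2, ⟨x, hxi', hxi⟩⟩
        have hsub : insert i' (J ∩ neighborIter B j m) ⊆ J ∩ neighborIter B j (m+1) := by
          intro z hz
          rcases hz with rfl | hz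
          · exact ⟨hi'.1, hi'succ⟩
          · exact ⟨hz.1, hmono m z hz.1 hz.2⟩
        have hfin' : (J ∩ neighborIter B j (m+1)).Finite := hfin.subset Set.inter_subset_left
        have hfinm : (J ∩ neighborIter B j m).Finite := hfin.subset Set.inter_subset_left
        have hnot : i' ∉ J ∩ neighborIter B j m := fun hc => hi'.2 hc.2
        calc m + 1 + 1 ≤ (J ∩ neighborIter B j m).ncard + 1 := by omega
          _ = (insert i' (J ∩ neighborIter B j m)).ncard :=
              (Set.ncard_insert_of_notMem hnot hfinm).symm
          _ ≤ (J ∩ neighborIter B j (m+1)).ncard := Set.ncard_le_ncard hsub hfin'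
  rcases key N with hK | hK
  · intro x hx
    obtain ⟨i, hxi⟩ := hcov x hx
    exact Set.mem_biUnion (hK ⟨x, hxi, hx⟩) hxi
  · exfalso
    have : (J ∩ neighborIter B j N).ncard ≤ J.ncard :=
      Set.ncard_le_ncard Set.inter_subset_left hfin
    omega

end AuxLemmas

set_option maxHeartbeats 1000000 in
/-- For `0 ≤ α ≤ β < 1` and radii `r_α, r_β` for which the corresponding
`α`- and `β`-coverings of `ℝ^d` cover `ℝ^d` and have the finite overlap property, the
`α`-covering is almost subordinate to the `β`-covering: there is `n ∈ ℕ` such that every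
`B_k^{r_α,α}` is contained in the `n`-fold neighborhood `⋃_{l ∈ j^{n*}} B_l^{r_β,β}` of some
`B_j^{r_β,β}`. -/
theorem alpha_covering_almost_subordinate
    {d : ℕ} (hd : 1 ≤ d) (α β : ℝ) (hα0 : 0 ≤ α) (hαβ : α ≤ β) (hβ1 : β < 1)
    (rα rβ : ℝ) (hrα : 0 < rα) (hrβ : 0 < rβ)
    (hcovα : (⋃ k ∈ {k : Fin d → ℤ | k ≠ 0}, alphaBall d α rα k) = Set.univ)
    (hcovβ : (⋃ k ∈ {k : Fin d → ℤ | k ≠ 0}, alphaBall d β rβ k) = Set.univ)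
    (hovα : ∃ N : ℕ, ∀ k : Fin d → ℤ, k ≠ 0 →
      {l : Fin d → ℤ | l ≠ 0 ∧ (alphaBall d α rα l ∩ alphaBall d α rα k).Nonempty}.Finite ∧
      {l : Fin d → ℤ | l ≠ 0 ∧ (alphaBall d α rα l ∩ alphaBall d α rα k).Nonempty}.ncard ≤ N)
    (hovβ : ∃ N : ℕ, ∀ k : Fin d → ℤ, k ≠ 0 →
      {l : Fin d → ℤ | l ≠ 0 ∧ (alphaBall d β rβ l ∩ alphaBall d β rβ k).Nonempty}.Finite ∧
      {l : Fin d → ℤ | l ≠ 0 ∧ (alphaBall d β rβ l ∩ alphaBall d β rβ k).Nonempty}.ncard ≤ N) :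
    ∃ n : ℕ, ∀ k : {k : Fin d → ℤ // k ≠ 0}, ∃ j : {k : Fin d → ℤ // k ≠ 0},
      alphaBall d α rα k.1 ⊆
        ⋃ l ∈ neighborIter (fun m : {k : Fin d → ℤ // k ≠ 0} => alphaBall d β rβ m.1) j n,
          alphaBall d β rβ l.1 := by
  obtain ⟨N, hN⟩ := count_bound (d := d) hα0 hαβ hβ1 hrα hrβ
  refine ⟨N, fun k => ?_⟩
  have hcover : ∀ x : EuclideanSpace ℝ (Fin d),
      ∃ i : {k : Fin d → ℤ // k ≠ 0}, x ∈ alphaBall d β rβ i.1 := by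
    intro x
    have hx : x ∈ (⋃ k ∈ {k : Fin d → ℤ | k ≠ 0}, alphaBall d β rβ k) := by
      rw [hcovβ]; trivial
    rw [Set.mem_iUnion₂] at hx
    obtain ⟨l, hl, hxl⟩ := hx
    exact ⟨⟨l, hl⟩, hxl⟩
  have hS0 : (alphaBall d α rα k.1).Nonempty := by
    refine ⟨(‖intVec k.1‖ ^ (α / (1 - α))) • intVec k.1, ?_⟩
    rw [alphaBall, Metric.mem_ball, dist_self]
    have h1 : (0:ℝ) < ‖intVec k.1‖ := lt_of_lt_of_le one_pos (one_le_norm_intVec k.2)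
    positivity
  obtain ⟨x₀, hx₀⟩ := hS0
  obtain ⟨j, hjx⟩ := hcover x₀
  have hj : ((fun m : {k : Fin d → ℤ // k ≠ 0} => alphaBall d β rβ m.1) j
      ∩ alphaBall d α rα k.1).Nonempty := ⟨x₀, hjx, hx₀⟩
  obtain ⟨hfinJ, hcardJ⟩ := hN k.1 k.2
  have himg : Subtype.val '' {i : {k : Fin d → ℤ // k ≠ 0} |
        ((fun m : {k : Fin d → ℤ // k ≠ 0} => alphaBall d β rβ m.1) i
          ∩ alphaBall d α rα k.1).Nonempty}
      ⊆ {l : Fin d → ℤ | l ≠ 0 ∧ (alphaBall d β rβ l ∩ alphaBall d α rα k.1).Nonempty} := by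
    rintro l ⟨i, hi, rfl⟩
    exact ⟨i.2, hi⟩
  have hfin' : {i : {k : Fin d → ℤ // k ≠ 0} |
      ((fun m : {k : Fin d → ℤ // k ≠ 0} => alphaBall d β rβ m.1) i
        ∩ alphaBall d α rα k.1).Nonempty}.Finite :=
    (hfinJ.subset himg).of_finite_image (Subtype.val_injective.injOn)
  have hcard' : {i : {k : Fin d → ℤ // k ≠ 0} |
      ((fun m : {k : Fin d → ℤ // k ≠ 0} => alphaBall d β rβ m.1) i
        ∩ alphaBall d α rα k.1).Nonempty}.ncard ≤ N := by
    rw [← Set.ncard_image_of_injective _ Subtype.val_injective]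
    exact le_trans (Set.ncard_le_ncard himg hfinJ) hcardJ
  exact ⟨j, chain_lemma _ (fun i => Metric.isOpen_ball) _
    ((convex_ball _ _).isPreconnected) (fun x _ => hcover x) N hfin' hcard' j hj⟩
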